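/- arXiv:2001.11891 — 2 statements merged into one kernel-verified Lean document; each statement's English description precedes it below -/
import Mathlib

section
/- In the large homogeneous portfolio (LHP) model, the percentage portfolio loss converges almost surely: (1−R)·(1/n)·∑_{i=1}^n 1{Y_i ≤ c} → (1−R)·Φ((c − √ρ·V)/√(1−ρ)) as n → ∞, almost surely. -/
open MeasureTheory ProbabilityTheory Filter Topology

/-- The standard normal cumulative distribution function `Φ`. -/
noncomputable def Phi (x : ℝ) : ℝ := (gaussianReal 0 1 (Set.Iic x)).toReal

lemma Phi_measurable : Measurable Phi := by
  have : Monotone Phi := fun a b hab =>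
    ENNReal.toReal_mono (measure_ne_top _ _) (measure_mono (Set.Iic_subset_Iic.2 hab))
  exact this.measurable

lemma slln_aux {Ω : Type*} [MeasureSpace Ω] [IsProbabilityMeasure (ℙ : Measure Ω)]
    (ε : ℕ → Ω → ℝ) (hε : ∀ i, Measurable (ε i))
    (hεlaw : ∀ i, Measure.map (ε i) ℙ = gaussianReal 0 1)
    (hpind : ∀ i j : ℕ, i ≠ j → IndepFun (ε i) (ε j) ℙ) (t : ℝ) :
    ∀ᵐ e ∂(Measure.map (fun ω i => ε i ω) ℙ),
      Tendsto (fun n : ℕ => (∑ i ∈ Finset.range n, (Set.Iic t).indicator 1 (e i)) / (n : ℝ))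
        atTop (𝓝 (Phi t)) := by
  set S : Ω → (ℕ → ℝ) := fun ω i => ε i ω with hSdef
  have hS : Measurable S := measurable_pi_lambda _ hε
  set ν : Measure (ℕ → ℝ) := Measure.map S ℙ with hν
  have : IsProbabilityMeasure ν := Measure.isProbabilityMeasure_map hS.aemeasurable
  set X : ℕ → (ℕ → ℝ) → ℝ := fun i e => (Set.Iic t).indicator 1 (e i) with hX
  have hXmeas : ∀ i, Measurable (X i) :=
    fun i => (measurable_const.indicator measurableSet_Iic).comp (measurable_pi_apply i)
  have hmap : ∀ i, ν.map (fun e => e i) = gaussianReal 0 1 := by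
    intro i
    rw [hν, Measure.map_map (measurable_pi_apply i) hS]
    exact hεlaw i
  have hindicator : Measurable ((Set.Iic t).indicator (1 : ℝ → ℝ)) :=
    measurable_const.indicator measurableSet_Iic
  have hint : Integrable (X 0) ν := by
    have : X 0 = Set.indicator ((fun e : ℕ → ℝ => e 0) ⁻¹' Set.Iic t) (1 : (ℕ → ℝ) → ℝ) := by
      ext e; by_cases h : e 0 ≤ t <;> simp [hX, Set.indicator_apply, h]
    rw [this]
    exact (integrable_const 1).indicator (measurableSet_Iic.preimage (measurable_pi_apply 0))
  have hindep : Pairwise (Function.onFun (IndepFun · · ν) X) := by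
    intro i j hij
    have hev : IndepFun (fun e : ℕ → ℝ => e i) (fun e : ℕ → ℝ => e j) ν := by
      rw [indepFun_iff_map_prod_eq_prod_map_map (measurable_pi_apply i).aemeasurable
        (measurable_pi_apply j).aemeasurable]
      rw [hν, Measure.map_map ((measurable_pi_apply i).prodMk (measurable_pi_apply j)) hS,
        Measure.map_map (measurable_pi_apply i) hS, Measure.map_map (measurable_pi_apply j) hS]
      have := (hpind i j hij)
      rw [indepFun_iff_map_prod_eq_prod_map_map (hε i).aemeasurable (hε j).aemeasurable] at this
      exact this
    exact hev.comp hindicator hindicator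
  have hident : ∀ i, IdentDistrib (X i) (X 0) ν ν := by
    intro i
    have hev : IdentDistrib (fun e : ℕ → ℝ => e i) (fun e : ℕ → ℝ => e 0) ν ν :=
      ⟨(measurable_pi_apply i).aemeasurable, (measurable_pi_apply 0).aemeasurable,
        by rw [hmap, hmap]⟩
    exact hev.comp hindicator
  have hE : ν[X 0] = Phi t := by
    have : X 0 = Set.indicator ((fun e : ℕ → ℝ => e 0) ⁻¹' Set.Iic t) (1 : (ℕ → ℝ) → ℝ) := by
      ext e; by_cases h : e 0 ≤ t <;> simp [hX, Set.indicator_apply, h]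
    rw [this, integral_indicator_one (measurableSet_Iic.preimage (measurable_pi_apply 0)),
      measureReal_def, ← Measure.map_apply (measurable_pi_apply 0) measurableSet_Iic, hmap]
    rfl
  have := strong_law_ae_real X hint hindep hident
  rw [hE] at this
  exact this

/-- Large homogeneous portfolio model: `V` and `(ε_i)` independent standard
normals, `ρ ∈ (0,1)`, `Y_i = √ρ·V + √(1−ρ)·ε_i`, threshold `c`, recovery `R ∈ [0,1)`.
Then, almost surely,
`(1−R)·(1/n)·∑_{i<n} 1{Y_i ≤ c} → (1−R)·Φ((c − √ρ·V)/√(1−ρ))` as `n → ∞`. -/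
theorem lhp_loss_convergence
    {Ω : Type*} [MeasureSpace Ω] [IsProbabilityMeasure (ℙ : Measure Ω)]
    (V : Ω → ℝ) (ε : ℕ → Ω → ℝ)
    (hV : Measurable V) (hε : ∀ i, Measurable (ε i))
    (hVlaw : Measure.map V ℙ = gaussianReal 0 1)
    (hεlaw : ∀ i, Measure.map (ε i) ℙ = gaussianReal 0 1)
    (hindep : iIndepFun
      (fun o : Option ℕ => o.elim V fun i => ε i) ℙ)
    (ρ : ℝ) (hρ : ρ ∈ Set.Ioo (0 : ℝ) 1) (c : ℝ) (R : ℝ) (hR : R ∈ Set.Ico (0 : ℝ) 1)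
    (Y : ℕ → Ω → ℝ)
    (hY : ∀ i, Y i = fun ω => Real.sqrt ρ * V ω + Real.sqrt (1 - ρ) * ε i ω) :
    ∀ᵐ ω ∂ℙ, Tendsto
      (fun n : ℕ => (1 - R) * ((1 : ℝ) / n) *
        ∑ i ∈ Finset.range n, Set.indicator {ω' | Y i ω' ≤ c} (fun _ => (1 : ℝ)) ω)
      atTop
      (nhds ((1 - R) * Phi ((c - Real.sqrt ρ * V ω) / Real.sqrt (1 - ρ)))) := by
  have hs : 0 < Real.sqrt (1 - ρ) := Real.sqrt_pos.2 (by linarith [hρ.2])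
  set T : ℝ → ℝ := fun v => (c - Real.sqrt ρ * v) / Real.sqrt (1 - ρ) with hT
  have hTmeas : Measurable T :=
    (measurable_const.sub (measurable_const.mul measurable_id)).div_const _
  set S : Ω → (ℕ → ℝ) := fun ω i => ε i ω with hSdef
  have hS : Measurable S := measurable_pi_lambda _ hε
  set ν : Measure (ℕ → ℝ) := Measure.map S ℙ with hν
  have hνprob : IsProbabilityMeasure ν := Measure.isProbabilityMeasure_map hS.aemeasurable
  set μ : Measure ℝ := gaussianReal 0 1 with hμ
  -- independence of V and S
  have hVS : IndepFun V S ℙ := by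
    have h1 := hindep.iIndep
    have hle : ∀ o : Option ℕ, (inferInstance : MeasurableSpace ℝ).comap
        ((fun o : Option ℕ => o.elim V fun i => ε i) o) ≤ (inferInstance : MeasurableSpace Ω) := by
      rintro (_|i)
      · exact hV.comap_le
      · exact (hε i).comap_le
    have h2 := indep_iSup_of_disjoint hle h1 (S := {none}) (T := {(none : Option ℕ)}ᶜ)
      disjoint_compl_right
    rw [IndepFun_iff_Indep]
    have e1 : (⨆ o ∈ ({none} : Set (Option ℕ)), (inferInstance : MeasurableSpace ℝ).comap
        ((fun o : Option ℕ => o.elim V fun i => ε i) o)) =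
        (inferInstance : MeasurableSpace ℝ).comap V := by simp
    have e2 : (⨆ o ∈ ({(none : Option ℕ)}ᶜ : Set (Option ℕ)),
        (inferInstance : MeasurableSpace ℝ).comap
        ((fun o : Option ℕ => o.elim V fun i => ε i) o)) =
        (inferInstance : MeasurableSpace (ℕ → ℝ)).comap S := by
      rw [MeasurableSpace.pi, MeasurableSpace.comap_iSup]
      rw [show ({(none : Option ℕ)}ᶜ : Set (Option ℕ)) = Set.range Option.some by
        ext o; cases o <;> simp]
      rw [iSup_range]
      refine iSup_congr fun i => ?_
      rw [MeasurableSpace.comap_comp]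
      rfl
    rwa [e1, e2] at h2
  have hjoint : Measure.map (fun ω => (V ω, S ω)) ℙ = μ.prod ν := by
    rw [indepFun_iff_map_prod_eq_prod_map_map hV.aemeasurable hS.aemeasurable] at hVS
    rw [hVS, hVlaw]
  -- the good event in the product space
  set B : Set (ℝ × (ℕ → ℝ)) := {p | Tendsto
      (fun n : ℕ => (∑ i ∈ Finset.range n, (Set.Iic (T p.1)).indicator 1 (p.2 i)) / (n : ℝ))
      atTop (𝓝 (Phi (T p.1)))} with hB
  have hterm : ∀ i : ℕ, Measurable
      (fun p : ℝ × (ℕ → ℝ) => (Set.Iic (T p.1)).indicator (1 : ℝ → ℝ) (p.2 i)) := by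
    intro i
    have heq : (fun p : ℝ × (ℕ → ℝ) => (Set.Iic (T p.1)).indicator (1 : ℝ → ℝ) (p.2 i)) =
        Set.indicator {p : ℝ × (ℕ → ℝ) | p.2 i ≤ T p.1} (fun _ => (1 : ℝ)) := by
      ext p; by_cases h : p.2 i ≤ T p.1 <;> simp [Set.indicator_apply, h]
    rw [heq]
    exact measurable_const.indicator
      (measurableSet_le (measurable_snd.eval)
        (hTmeas.comp measurable_fst))
  have hBmeas : MeasurableSet B := by
    apply measurableSet_tendsto_fun
    · intro n
      exact (Finset.measurable_sum _ fun i _ => hterm i).div_const _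
    · exact Phi_measurable.comp (hTmeas.comp measurable_fst)
  have hpind : ∀ i j : ℕ, i ≠ j → IndepFun (ε i) (ε j) ℙ := by
    intro i j hij
    exact hindep.indepFun (i := some i) (j := some j) (by simpa using hij)
  have hkey : ∀ᵐ p ∂(μ.prod ν), p ∈ B := by
    rw [show (∀ᵐ p ∂(μ.prod ν), p ∈ B) ↔ ∀ᵐ v ∂μ, ∀ᵐ e ∂ν, (v, e) ∈ B from
      Measure.ae_prod_iff_ae_ae hBmeas]
    refine Eventually.of_forall fun v => ?_
    exact slln_aux ε hε hεlaw hpind (T v)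
  have hae : ∀ᵐ ω ∂ℙ, (V ω, S ω) ∈ B := by
    rw [← hjoint] at hkey
    exact (ae_map_iff (hV.prodMk hS).aemeasurable hBmeas).1 hkey
  filter_upwards [hae] with ω hω
  have hiff : ∀ i : ℕ, (Y i ω ≤ c ↔ ε i ω ≤ T (V ω)) := by
    intro i
    rw [hY i, hT]
    simp only
    rw [le_div_iff₀ hs]
    constructor <;> intro h <;> nlinarith [mul_comm (ε i ω) (Real.sqrt (1 - ρ))]
  have hω' : Tendsto
      (fun n : ℕ => (1 - R) * ((∑ i ∈ Finset.range n,
        (Set.Iic (T (V ω))).indicator (1 : ℝ → ℝ) (ε i ω)) / (n : ℝ)))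
      atTop (𝓝 ((1 - R) * Phi (T (V ω)))) := hω.const_mul _
  refine Tendsto.congr (fun n => ?_) hω'
  have hsum : (∑ i ∈ Finset.range n, (Set.Iic (T (V ω))).indicator (1 : ℝ → ℝ) (ε i ω)) =
      ∑ i ∈ Finset.range n, Set.indicator {ω' | Y i ω' ≤ c} (fun _ => (1 : ℝ)) ω := by
    refine Finset.sum_congr rfl fun i _ => ?_
    by_cases h : Y i ω ≤ c
    · simp [Set.indicator_apply, h, (hiff i).1 h]
    · have hN : ¬ ε i ω ≤ T (V ω) := fun h' => h ((hiff i).2 h')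
      simp [Set.indicator_apply, h, hN]
  rw [hsum]; ring
end

section
/- (Proposition 1, LH++ model) The loss exceedance probability satisfies P(L > α) = ∑_{k=0}^n C(n,k) · P(V ≤ A(α,k), X_1 ≤ c_0, …, X_k ≤ c_0, X_{k+1} > c_0, …, X_n > c_0), where C(n,k) is the binomial coefficient. -/
open MeasureTheory ProbabilityTheory
open Set
open scoped ENNReal NNReal

/-- The inverse of the standard normal cdf. -/
noncomputable def PhiInv : ℝ → ℝ := Function.invFun Phi

/-- The threshold `A(α,k) = (c − √(1−ρ)·Φ⁻¹(0 ∨ (1 ∧ (α − k·N₀(1−R₀))/(N(1−R)))))/√ρ`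
in the extended reals, with the conventions `Φ⁻¹(0) = −∞` (so `A = +∞`) and
`Φ⁻¹(1) = +∞` (so `A = −∞`). -/
noncomputable def Athr (c ρ N R N0 R0 α : ℝ) (k : ℕ) : EReal :=
  if max 0 (min 1 ((α - k * N0 * (1 - R0)) / (N * (1 - R)))) ≤ 0 then ⊤
  else if 1 ≤ max 0 (min 1 ((α - k * N0 * (1 - R0)) / (N * (1 - R)))) then ⊥
  else ((c - Real.sqrt (1 - ρ) *
      PhiInv (max 0 (min 1 ((α - k * N0 * (1 - R0)) / (N * (1 - R)))))) / Real.sqrt ρ : ℝ)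

lemma gauss_ne_top (s : Set ℝ) : gaussianReal 0 1 s ≠ ⊤ :=
  (measure_lt_top _ _).ne

lemma gauss_pos {s : Set ℝ} (h : volume s ≠ 0) : 0 < gaussianReal 0 1 s := by
  rw [pos_iff_ne_zero]
  intro h0
  exact h (gaussianReal_absolutelyContinuous' 0 one_ne_zero h0)

lemma gauss_singleton (a : ℝ) : gaussianReal 0 1 {a} = 0 :=
  gaussianReal_absolutelyContinuous 0 one_ne_zero (measure_singleton a)

lemma Phi_pos (x : ℝ) : 0 < Phi x := by
  rw [Phi]
  refine ENNReal.toReal_pos (gauss_pos ?_).ne' (gauss_ne_top _)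
  simp [Real.volume_Iic]

lemma Phi_lt_one (x : ℝ) : Phi x < 1 := by
  have h : gaussianReal 0 1 (Set.Iic x) < 1 := by
    have hu : gaussianReal 0 1 (Set.Iic x) + gaussianReal 0 1 (Set.Ioi x) = 1 := by
      rw [← measure_union (Set.Iic_disjoint_Ioi le_rfl) measurableSet_Ioi,
        Set.Iic_union_Ioi, measure_univ]
    have hpos : 0 < gaussianReal 0 1 (Set.Ioi x) := gauss_pos (by simp [Real.volume_Ioi])
    calc gaussianReal 0 1 (Set.Iic x) < gaussianReal 0 1 (Set.Iic x) + gaussianReal 0 1 (Set.Ioi x) :=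
        ENNReal.lt_add_right (gauss_ne_top _) hpos.ne'
      _ = 1 := hu
  rw [Phi]
  have := ENNReal.toReal_lt_toReal (gauss_ne_top _) (by simp : (1:ℝ≥0∞) ≠ ⊤) |>.mpr h
  simpa using this

lemma Phi_strictMono : StrictMono Phi := by
  intro x y hxy
  rw [Phi, Phi]
  refine ENNReal.toReal_lt_toReal (gauss_ne_top _) (gauss_ne_top _) |>.mpr ?_
  have hu : gaussianReal 0 1 (Set.Iic x) + gaussianReal 0 1 (Set.Ioc x y) = gaussianReal 0 1 (Set.Iic y) := by
    rw [← measure_union (Set.Iic_disjoint_Ioc le_rfl) measurableSet_Ioc, Set.Iic_union_Ioc_eq_Iic hxy.le]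
  have hpos : 0 < gaussianReal 0 1 (Set.Ioc x y) := gauss_pos (by simp [Real.volume_Ioc, hxy])
  calc gaussianReal 0 1 (Set.Iic x) < gaussianReal 0 1 (Set.Iic x) + gaussianReal 0 1 (Set.Ioc x y) :=
      ENNReal.lt_add_right (gauss_ne_top _) hpos.ne'
    _ = _ := hu

lemma gaussianPDF_le_one (x : ℝ) : gaussianPDF 0 1 x ≤ 1 := by
  rw [gaussianPDF]
  refine ENNReal.ofReal_le_one.mpr ?_
  rw [gaussianPDFReal]
  have h1 : Real.exp (-(x - 0) ^ 2 / (2 * (1:ℝ≥0))) ≤ 1 := by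
    rw [Real.exp_le_one_iff]
    have : (0:ℝ) ≤ (x - 0)^2 := sq_nonneg _
    have h2 : (0:ℝ) < 2 * (1:ℝ≥0) := by norm_num
    apply div_nonpos_of_nonpos_of_nonneg <;> nlinarith
  have h2 : (1:ℝ) / Real.sqrt (2 * Real.pi * (1:ℝ≥0)) ≤ 1 := by
    rw [div_le_one (by positivity)]
    have : (1:ℝ) ≤ 2 * Real.pi * (1:ℝ≥0) := by
      have := Real.pi_gt_three
      push_cast
      nlinarith
    nlinarith [Real.sqrt_le_sqrt this, Real.sqrt_one, Real.sq_sqrt (by nlinarith : (0:ℝ) ≤ 2*Real.pi*(1:ℝ≥0))]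
  have := mul_le_mul h2 h1 (Real.exp_nonneg _) zero_le_one
  rw [one_mul] at this
  convert this using 2
  rfl
  rw [one_div]

lemma gauss_Ioc_le (x y : ℝ) : gaussianReal 0 1 (Set.Ioc x y) ≤ ENNReal.ofReal (y - x) := by
  rcases le_or_gt y x with h | h
  · simp [Set.Ioc_eq_empty_of_le h]
  rw [gaussianReal_apply 0 one_ne_zero]
  calc ∫⁻ t in Set.Ioc x y, gaussianPDF 0 1 t ≤ ∫⁻ _ in Set.Ioc x y, 1 :=
      lintegral_mono fun t => gaussianPDF_le_one t
    _ = volume (Set.Ioc x y) := by simp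
    _ = ENNReal.ofReal (y - x) := by rw [Real.volume_Ioc]

lemma Phi_sub_Phi {x y : ℝ} (h : x ≤ y) : Phi y - Phi x = (gaussianReal 0 1 (Set.Ioc x y)).toReal := by
  have hu : gaussianReal 0 1 (Set.Iic x) + gaussianReal 0 1 (Set.Ioc x y) = gaussianReal 0 1 (Set.Iic y) := by
    rw [← measure_union (Set.Iic_disjoint_Ioc le_rfl) measurableSet_Ioc, Set.Iic_union_Ioc_eq_Iic h]
  rw [Phi, Phi, ← hu, ENNReal.toReal_add (gauss_ne_top _) (gauss_ne_top _)]
  ring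

lemma Phi_continuous : Continuous Phi := by
  have : LipschitzWith 1 Phi := by
    refine LipschitzWith.of_dist_le_mul fun x y => ?_
    wlog hxy : y ≤ x generalizing x y
    · rw [dist_comm, dist_comm x y]; exact this y x (le_of_not_ge hxy)
    rw [Real.dist_eq, Real.dist_eq, abs_of_nonneg (sub_nonneg.2 (Phi_strictMono.monotone hxy)),
      abs_of_nonneg (sub_nonneg.2 hxy), Phi_sub_Phi hxy]
    have := gauss_Ioc_le y x
    have h2 : (gaussianReal 0 1 (Set.Ioc y x)).toReal ≤ (ENNReal.ofReal (x - y)).toReal :=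
      ENNReal.toReal_mono (by simp) this
    rw [ENNReal.toReal_ofReal (by linarith)] at h2
    push_cast
    linarith
  exact this.continuous

lemma Phi_tendsto_atTop : Filter.Tendsto Phi Filter.atTop (nhds 1) := by
  have h := tendsto_measure_Iic_atTop (gaussianReal 0 1)
  rw [measure_univ] at h
  have := (ENNReal.tendsto_toReal (by simp : (1:ℝ≥0∞) ≠ ⊤)).comp h
  rw [show Phi = fun x => (gaussianReal 0 1 (Set.Iic x)).toReal from rfl]
  simpa [Phi, Function.comp_def] using this

lemma Phi_tendsto_atBot : Filter.Tendsto Phi Filter.atBot (nhds 0) := by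
  have key : ∀ x : ℝ, Phi x ≤ 1 - (gaussianReal 0 1 (Set.Ici x)).toReal := by
    intro x
    have hu : gaussianReal 0 1 (Set.Iio x) + gaussianReal 0 1 (Set.Ici x) = 1 := by
      rw [← measure_union (Set.Iio_disjoint_Ici le_rfl) measurableSet_Ici,
        Set.Iio_union_Ici, measure_univ]
    have hIic : gaussianReal 0 1 (Set.Iic x) = gaussianReal 0 1 (Set.Iio x) := by
      have : Set.Iic x = Set.Iio x ∪ {x} := (Set.Iio_union_right).symm
      rw [this]
      refine le_antisymm ?_ (measure_mono Set.subset_union_left)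
      calc gaussianReal 0 1 (Set.Iio x ∪ {x}) ≤ _ + _ := measure_union_le _ _
        _ = gaussianReal 0 1 (Set.Iio x) := by rw [gauss_singleton, add_zero]
    rw [Phi, hIic]
    have := ENNReal.toReal_add (gauss_ne_top (Set.Iio x)) (gauss_ne_top (Set.Ici x))
    rw [hu] at this
    simp at this
    linarith
  have h := tendsto_measure_Ici_atBot (gaussianReal 0 1)
  rw [measure_univ] at h
  have h2 := (ENNReal.tendsto_toReal (by simp : (1:ℝ≥0∞) ≠ ⊤)).comp h
  simp only [ENNReal.toReal_one, Function.comp_def] at h2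
  have h3 : Filter.Tendsto (fun x => 1 - (gaussianReal 0 1 (Set.Ici x)).toReal) Filter.atBot (nhds 0) := by
    have := h2.const_sub 1
    simpa using this
  refine squeeze_zero' ?_ ?_ h3
  · exact Filter.Eventually.of_forall fun x => (Phi_pos x).le
  · exact Filter.Eventually.of_forall key

lemma Phi_surj {u : ℝ} (h0 : 0 < u) (h1 : u < 1) : ∃ x, Phi x = u := by
  obtain ⟨a, ha⟩ : ∃ a, Phi a < u := by
    have := Phi_tendsto_atBot.eventually (eventually_lt_nhds h0)
    exact (this.exists)
  obtain ⟨b, hb⟩ : ∃ b, u < Phi b := by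
    have := Phi_tendsto_atTop.eventually (eventually_gt_nhds h1)
    exact (this.exists)
  have hab : a ≤ b := by
    by_contra hc
    exact absurd (Phi_strictMono (lt_of_not_ge hc)) (by linarith)
  obtain ⟨x, _, hx⟩ := intermediate_value_Icc hab Phi_continuous.continuousOn
    (Set.mem_Icc.mpr ⟨ha.le, hb.le⟩)
  exact ⟨x, hx⟩

lemma Phi_PhiInv {u : ℝ} (h0 : 0 < u) (h1 : u < 1) : Phi (PhiInv u) = u := by
  obtain ⟨x, hx⟩ := Phi_surj h0 h1
  exact Function.invFun_eq ⟨x, hx⟩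

lemma lt_Phi_iff {u : ℝ} (h0 : 0 < u) (h1 : u < 1) (y : ℝ) :
    u < Phi y ↔ PhiInv u < y := by
  rw [← Phi_PhiInv h0 h1, Phi_strictMono.lt_iff_lt]
  rw [Phi_PhiInv h0 h1]

lemma map_joint_eq_pi {Ω : Type*} [MeasureSpace Ω] [IsProbabilityMeasure (ℙ : Measure Ω)]
    {ι : Type*} [Fintype ι] (f : ι → Ω → ℝ) (hf : ∀ i, Measurable (f i))
    (hlaw : ∀ i, Measure.map (f i) ℙ = gaussianReal 0 1)
    (hindep : iIndepFun f ℙ) :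
    Measure.map (fun ω i => f i ω) ℙ = Measure.pi (fun _ => gaussianReal 0 1) := by
  refine (Measure.pi_eq fun s hs => ?_).symm
  rw [Measure.map_apply (measurable_pi_lambda _ hf) (MeasurableSet.univ_pi hs)]
  have hpre : (fun ω i => f i ω) ⁻¹' Set.pi Set.univ s = ⋂ i ∈ Finset.univ, f i ⁻¹' s i := by
    ext ω; simp [Set.mem_pi]
  rw [hpre, hindep.measure_inter_preimage_eq_mul Finset.univ (fun i _ => hs i)]
  refine Finset.prod_congr rfl fun i _ => ?_
  rw [← hlaw i, Measure.map_apply (hf i) (hs i)]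

lemma pi_gauss_perm {ι : Type*} [Fintype ι] (σ : ι ≃ ι) {B : Set (ι → ℝ)} (hB : MeasurableSet B) :
    Measure.pi (fun _ : ι => gaussianReal 0 1)
        ((MeasurableEquiv.piCongrLeft (fun _ => ℝ) σ) ⁻¹' B)
      = Measure.pi (fun _ : ι => gaussianReal 0 1) B :=
  (MeasureTheory.measurePreserving_piCongrLeft (fun _ : ι => gaussianReal 0 1) σ).measure_preimage
    hB.nullMeasurableSet

lemma exists_perm_finset {n : ℕ} (s t : Finset (Fin n)) (h : s.card = t.card) :
    ∃ e : Equiv.Perm (Fin n), ∀ i, e i ∈ t ↔ i ∈ s := by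
  classical
  have h2 : sᶜ.card = tᶜ.card := by simp [Finset.card_compl, h]
  let e1 : {x // x ∈ s} ≃ {x // x ∈ t} := Finset.equivOfCardEq h
  let e2 : {x // x ∈ sᶜ} ≃ {x // x ∈ tᶜ} := Finset.equivOfCardEq h2
  let e2' : {x // ¬ x ∈ s} ≃ {x // ¬ x ∈ t} :=
    (Equiv.subtypeEquivRight (fun x => (Finset.mem_compl (s := s)).symm)).trans
      (e2.trans (Equiv.subtypeEquivRight fun x => Finset.mem_compl))
  refine ⟨(Equiv.sumCompl (· ∈ s)).symm.trans ((e1.sumCongr e2').trans (Equiv.sumCompl (· ∈ t))),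
    fun i => ?_⟩
  by_cases hi : i ∈ s
  · have : (Equiv.sumCompl (· ∈ s)).symm i = Sum.inl ⟨i, hi⟩ :=
      Equiv.sumCompl_symm_apply_of_pos hi
    simp only [Equiv.trans_apply, this, Equiv.sumCongr_apply, Sum.map_inl,
      Equiv.sumCompl_apply_inl]
    exact iff_of_true (e1 ⟨i, hi⟩).2 hi
  · have : (Equiv.sumCompl (· ∈ s)).symm i = Sum.inr ⟨i, hi⟩ :=
      Equiv.sumCompl_symm_apply_of_neg hi
    simp only [Equiv.trans_apply, this, Equiv.sumCongr_apply, Sum.map_inr,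
      Equiv.sumCompl_apply_inr]
    exact iff_of_false (e2' ⟨i, hi⟩).2 hi

lemma card_filter_lt {n k : ℕ} (hk : k ≤ n) :
    (Finset.univ.filter fun i : Fin n => (i : ℕ) < k).card = k := by
  have h : (Finset.univ.filter fun i : Fin n => (i : ℕ) < k) =
      Finset.map (Fin.castLEEmb hk) Finset.univ := by
    ext i
    simp only [Finset.mem_filter, Finset.mem_univ, true_and, Finset.mem_map]
    constructor
    · intro hi; exact ⟨⟨i, hi⟩, rfl⟩
    · rintro ⟨j, rfl⟩; exact j.2
  rw [h, Finset.card_map, Finset.card_univ, Fintype.card_fin]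

lemma exchange_lemma {Ω : Type*} [MeasureSpace Ω] [IsProbabilityMeasure (ℙ : Measure Ω)]
    {n : ℕ} (V : Ω → ℝ) (ξ : Fin n → Ω → ℝ)
    (hV : Measurable V) (hξ : ∀ i, Measurable (ξ i))
    (hVlaw : Measure.map V ℙ = gaussianReal 0 1)
    (hξlaw : ∀ i, Measure.map (ξ i) ℙ = gaussianReal 0 1)
    (hindep : iIndepFun
      (fun o : Option (Fin n) => o.elim V fun i => ξ i) ℙ)
    (h : ℝ → ℝ) (hh : Measurable h) (A : EReal) (s t : Finset (Fin n)) (hst : s.card = t.card) :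
    ℙ {ω | (V ω : EReal) ≤ A ∧ ∀ i, ξ i ω ≤ h (V ω) ↔ i ∈ s}
      = ℙ {ω | (V ω : EReal) ≤ A ∧ ∀ i, ξ i ω ≤ h (V ω) ↔ i ∈ t} := by
  classical
  obtain ⟨e, he⟩ := exists_perm_finset t s hst.symm
  set J : Ω → (Option (Fin n) → ℝ) := fun ω o => (o.elim V fun i => ξ i) ω with hJ
  have hfm : ∀ o : Option (Fin n), Measurable (o.elim V fun i => ξ i) := by
    rintro (_ | i); exacts [hV, hξ i]
  have hflaw : ∀ o : Option (Fin n),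
      Measure.map (o.elim V fun i => ξ i) ℙ = gaussianReal 0 1 := by
    rintro (_ | i); exacts [hVlaw, hξlaw i]
  have hJlaw : Measure.map J ℙ = Measure.pi (fun _ : Option (Fin n) => gaussianReal 0 1) :=
    map_joint_eq_pi _ hfm hflaw hindep
  have hJm : Measurable J := measurable_pi_lambda _ hfm
  set B : Finset (Fin n) → Set (Option (Fin n) → ℝ) := fun r =>
    {x | ((x none : ℝ) : EReal) ≤ A ∧ ∀ i, x (some i) ≤ h (x none) ↔ i ∈ r} with hB
  have hBmeas : ∀ r, MeasurableSet (B r) := by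
    intro r
    have h1 : MeasurableSet {x : Option (Fin n) → ℝ | ((x none : ℝ) : EReal) ≤ A} :=
      (measurable_coe_real_ereal.comp (measurable_pi_apply none)) measurableSet_Iic
    have h2 : ∀ i : Fin n, MeasurableSet {x : Option (Fin n) → ℝ | x (some i) ≤ h (x none)} :=
      fun i => measurableSet_le (measurable_pi_apply (some i))
        (hh.comp (measurable_pi_apply none))
    have hBr : B r = {x : Option (Fin n) → ℝ | ((x none : ℝ) : EReal) ≤ A}
        ∩ ⋂ i, {x | x (some i) ≤ h (x none) ↔ i ∈ r} := by
      ext x; simp [hB, Set.mem_iInter]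
    rw [hBr]
    refine h1.inter (MeasurableSet.iInter fun i => ?_)
    by_cases hi : i ∈ r
    · have h3 : {x : Option (Fin n) → ℝ | x (some i) ≤ h (x none) ↔ i ∈ r}
          = {x | x (some i) ≤ h (x none)} := by
        ext x; simp only [Set.mem_setOf_eq, hi, iff_true]
      rw [h3]; exact h2 i
    · have h3 : {x : Option (Fin n) → ℝ | x (some i) ≤ h (x none) ↔ i ∈ r}
          = {x | x (some i) ≤ h (x none)}ᶜ := by
        ext x; simp only [Set.mem_setOf_eq, Set.mem_compl_iff, hi, iff_false]
      rw [h3]; exact (h2 i).compl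
  have hpre : ∀ r, J ⁻¹' B r
      = {ω | (V ω : EReal) ≤ A ∧ ∀ i, ξ i ω ≤ h (V ω) ↔ i ∈ r} := fun r => rfl
  have key : ∀ r, ℙ (J ⁻¹' B r)
      = Measure.pi (fun _ : Option (Fin n) => gaussianReal 0 1) (B r) := by
    intro r; rw [← hJlaw, Measure.map_apply hJm (hBmeas r)]
  set σ : Option (Fin n) ≃ Option (Fin n) := Equiv.optionCongr e with hσ
  set F := MeasurableEquiv.piCongrLeft (fun _ : Option (Fin n) => ℝ) σ with hF
  have hFpre : F ⁻¹' B s = B t := by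
    ext x
    have hkey : ∀ o, F x (σ o) = x o := fun o => by
      rw [hF]; exact MeasurableEquiv.piCongrLeft_apply_apply σ (β := fun _ : Option (Fin n) => ℝ) x o
    have hFnone : F x none = x none := hkey none
    have hFsome : ∀ j, F x (some (e j)) = x (some j) := fun j => hkey (some j)
    simp only [Set.mem_preimage, hB, Set.mem_setOf_eq]
    constructor
    · rintro ⟨h1, h2⟩
      rw [hFnone] at h1
      refine ⟨h1, fun j => ?_⟩
      have h3 := h2 (e j)
      rw [hFsome j, hFnone] at h3
      exact h3.trans (he j)
    · rintro ⟨h1, h2⟩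
      refine ⟨by rwa [hFnone], fun i => ?_⟩
      obtain ⟨j, rfl⟩ : ∃ j, e j = i := ⟨e.symm i, e.apply_symm_apply i⟩
      rw [hFsome j, hFnone]
      exact (h2 j).trans (he j).symm
  calc ℙ {ω | (V ω : EReal) ≤ A ∧ ∀ i, ξ i ω ≤ h (V ω) ↔ i ∈ s}
      = ℙ (J ⁻¹' B s) := by rw [hpre]
    _ = Measure.pi (fun _ : Option (Fin n) => gaussianReal 0 1) (B s) := key s
    _ = Measure.pi (fun _ : Option (Fin n) => gaussianReal 0 1) (F ⁻¹' B s) :=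
        (pi_gauss_perm σ (hBmeas s)).symm
    _ = Measure.pi (fun _ : Option (Fin n) => gaussianReal 0 1) (B t) := by rw [hFpre]
    _ = ℙ (J ⁻¹' B t) := (key t).symm
    _ = _ := by rw [hpre]

/-- **Proposition 1, LH++ model.**
`P(L > α) = ∑_{k=0}^n C(n,k) · P(V ≤ A(α,k), X_1 ≤ c_0, …, X_k ≤ c_0, X_{k+1} > c_0, …,
X_n > c_0)`. -/
theorem lhpp_loss_exceedance_prob
    {Ω : Type*} [MeasureSpace Ω] [IsProbabilityMeasure (ℙ : Measure Ω)]
    (n : ℕ) (V : Ω → ℝ) (ξ : Fin n → Ω → ℝ)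
    (hV : Measurable V) (hξ : ∀ i, Measurable (ξ i))
    (hVlaw : Measure.map V ℙ = gaussianReal 0 1)
    (hξlaw : ∀ i, Measure.map (ξ i) ℙ = gaussianReal 0 1)
    (hindep : iIndepFun
      (fun o : Option (Fin n) => o.elim V fun i => ξ i) ℙ)
    (ρ ρ0 : ℝ) (hρ : ρ ∈ Set.Ioo (0 : ℝ) 1) (hρ0 : ρ0 ∈ Set.Ioo (0 : ℝ) 1)
    (c c0 : ℝ) (R R0 : ℝ) (hR : R ∈ Set.Ico (0 : ℝ) 1) (hR0 : R0 ∈ Set.Ico (0 : ℝ) 1)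
    (N N0 : ℝ) (hN : 0 < N) (hN0 : 0 < N0) (hsum : N + n * N0 = 1)
    (X : Fin n → Ω → ℝ)
    (hX : ∀ i, X i = fun ω => Real.sqrt ρ0 * V ω + Real.sqrt (1 - ρ0) * ξ i ω)
    (L : Ω → ℝ)
    (hL : L = fun ω =>
      (∑ i : Fin n, N0 * (1 - R0) * Set.indicator {ω' | X i ω' ≤ c0} (fun _ => (1 : ℝ)) ω)
        + N * (1 - R) * Phi ((c - Real.sqrt ρ * V ω) / Real.sqrt (1 - ρ)))
    (α : ℝ) :
    (ℙ {ω | α < L ω}).toReal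
      = ∑ k ∈ Finset.range (n + 1), (n.choose k : ℝ) *
          (ℙ {ω | (V ω : EReal) ≤ Athr c ρ N R N0 R0 α k ∧
              ∀ i : Fin n, ((i : ℕ) < k → X i ω ≤ c0) ∧ (k ≤ (i : ℕ) → c0 < X i ω)}).toReal := by
  classical
  obtain ⟨hρa, hρb⟩ := hρ
  obtain ⟨hρ0a, hρ0b⟩ := hρ0
  have hsρ : 0 < Real.sqrt ρ := Real.sqrt_pos.mpr hρa
  have hs1ρ : 0 < Real.sqrt (1 - ρ) := Real.sqrt_pos.mpr (by linarith)
  have hs1ρ0 : 0 < Real.sqrt (1 - ρ0) := Real.sqrt_pos.mpr (by linarith)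
  have hNR : 0 < N * (1 - R) := mul_pos hN (by linarith [hR.2])
  have hXm : ∀ i, Measurable (X i) := fun i => by
    rw [hX i]; exact (measurable_const.mul hV).add (measurable_const.mul (hξ i))
  have hLm : Measurable L := by
    rw [hL]
    refine Measurable.add (Finset.measurable_sum _ fun i _ => ?_) ?_
    · exact measurable_const.mul (Measurable.indicator measurable_const
        (measurableSet_le (hXm i) measurable_const))
    · exact measurable_const.mul (Phi_continuous.measurable.comp
        ((measurable_const.sub (measurable_const.mul hV)).div_const _))
  -- the function h linking X and ξ
  set h : ℝ → ℝ := fun v => (c0 - Real.sqrt ρ0 * v) / Real.sqrt (1 - ρ0) with hh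
  have hhm : Measurable h := (measurable_const.sub (measurable_const.mul measurable_id)).div_const _
  have hXiff : ∀ (i : Fin n) (ω : Ω), (X i ω ≤ c0 ↔ ξ i ω ≤ h (V ω)) := by
    intro i ω
    rw [hX i]
    simp only [hh]
    rw [le_div_iff₀ hs1ρ0]
    constructor <;> intro hle <;> nlinarith
  set A : ℕ → EReal := Athr c ρ N R N0 R0 α with hA
  set P : Finset (Fin n) → Set Ω := fun s => {ω | ∀ i, X i ω ≤ c0 ↔ i ∈ s} with hP
  set s0 : ℕ → Finset (Fin n) := fun k => Finset.univ.filter fun i : Fin n => (i : ℕ) < k with hs0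
  set T : ℕ → Set Ω := fun k => {ω | (V ω : EReal) ≤ A k ∧ ∀ i, X i ω ≤ c0 ↔ i ∈ s0 k} with hT
  have hPmeas : ∀ s, MeasurableSet (P s) := by
    intro s
    have hps : P s = ⋂ i, {ω | X i ω ≤ c0 ↔ i ∈ s} := by
      ext ω; simp [hP, Set.mem_iInter]
    rw [hps]
    refine MeasurableSet.iInter fun i => ?_
    by_cases hi : i ∈ s
    · have h3 : {ω | X i ω ≤ c0 ↔ i ∈ s} = {ω | X i ω ≤ c0} := by
        ext ω; simp only [Set.mem_setOf_eq, hi, iff_true]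
      rw [h3]; exact measurableSet_le (hXm i) measurable_const
    · have h3 : {ω | X i ω ≤ c0 ↔ i ∈ s} = {ω | X i ω ≤ c0}ᶜ := by
        ext ω; simp only [Set.mem_setOf_eq, Set.mem_compl_iff, hi, iff_false]
      rw [h3]; exact (measurableSet_le (hXm i) measurable_const).compl
  have hVAmeas : ∀ k : ℕ, MeasurableSet {ω | (V ω : EReal) ≤ A k} :=
    fun k => (measurable_coe_real_ereal.comp hV) measurableSet_Iic
  -- Step 1: partition of the exceedance event
  have hcover : {ω | α < L ω} = ⋃ s : Finset (Fin n), ({ω | α < L ω} ∩ P s) := by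
    ext ω
    simp only [Set.mem_iUnion, Set.mem_inter_iff, Set.mem_setOf_eq]
    constructor
    · intro hω
      refine ⟨Finset.univ.filter (fun i => X i ω ≤ c0), hω, ?_⟩
      simp [hP]
    · rintro ⟨s, hω, -⟩; exact hω
  have hdisj : Pairwise (Function.onFun Disjoint fun s => {ω | α < L ω} ∩ P s) := by
    intro s t hst
    rw [Function.onFun, Set.disjoint_left]
    rintro ω ⟨-, hω1⟩ ⟨-, hω2⟩
    refine hst ?_
    ext i
    rw [← hω1 i, hω2 i]
  have hstep1 : ℙ {ω | α < L ω} = ∑ s : Finset (Fin n), ℙ ({ω | α < L ω} ∩ P s) := by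
    conv_lhs => rw [hcover]
    rw [measure_iUnion hdisj fun s => (hLm measurableSet_Ioi).inter (hPmeas s), tsum_fintype]
  -- Step 2: per-pattern identification with the threshold event
  have hstep2 : ∀ s : Finset (Fin n),
      ℙ ({ω | α < L ω} ∩ P s) = ℙ ({ω | (V ω : EReal) ≤ A s.card} ∩ P s) := by
    intro s
    set k := s.card with hk
    set u : ℝ := (α - k * N0 * (1 - R0)) / (N * (1 - R)) with hu
    have hueq : ∀ ω, ω ∈ P s →
        (α < L ω ↔ u < Phi ((c - Real.sqrt ρ * V ω) / Real.sqrt (1 - ρ))) := by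
      intro ω hω
      have hind : (∑ i : Fin n, N0 * (1 - R0) *
          Set.indicator {ω' | X i ω' ≤ c0} (fun _ => (1 : ℝ)) ω) = k * (N0 * (1 - R0)) := by
        have h1 : ∀ i : Fin n, N0 * (1 - R0) *
            Set.indicator {ω' | X i ω' ≤ c0} (fun _ => (1 : ℝ)) ω
            = if i ∈ s then N0 * (1 - R0) else 0 := by
          intro i
          simp only [Set.indicator_apply, Set.mem_setOf_eq]
          by_cases hi : i ∈ s
          · rw [if_pos ((hω i).mpr hi), if_pos hi, mul_one]
          · rw [if_neg (fun hc => hi ((hω i).mp hc)), if_neg hi, mul_zero]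
        rw [Finset.sum_congr rfl fun i _ => h1 i, Finset.sum_ite_mem, Finset.univ_inter,
          Finset.sum_const, nsmul_eq_mul]
      rw [hL]
      simp only []
      rw [hind, hu, div_lt_iff₀ hNR]
      constructor <;> intro hlt <;> nlinarith
    rcases le_or_gt u 0 with hu0 | hu0
    · have hAk : A k = ⊤ := by
        rw [hA, Athr, if_pos (max_le le_rfl (le_trans (min_le_right _ _) hu0))]
      have : {ω | α < L ω} ∩ P s = {ω | (V ω : EReal) ≤ A k} ∩ P s := by
        ext ω
        simp only [Set.mem_inter_iff, Set.mem_setOf_eq, hAk, le_top, true_and]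
        constructor
        · rintro ⟨-, h2⟩; exact h2
        · intro h2; exact ⟨(hueq ω h2).mpr (lt_of_le_of_lt hu0 (Phi_pos _)), h2⟩
      rw [this]
    rcases le_or_gt 1 u with hu1 | hu1
    · have hmin : min 1 u = 1 := min_eq_left hu1
      have hAk : A k = ⊥ := by
        rw [hA, Athr, hmin, if_neg (by norm_num), if_pos (by norm_num)]
      have : {ω | α < L ω} ∩ P s = {ω | (V ω : EReal) ≤ A k} ∩ P s := by
        ext ω
        simp only [Set.mem_inter_iff, Set.mem_setOf_eq, hAk, le_bot_iff]
        constructor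
        · rintro ⟨h1, h2⟩
          exact absurd ((hueq ω h2).mp h1) (by linarith [Phi_lt_one ((c - Real.sqrt ρ * V ω) / Real.sqrt (1 - ρ))])
        · rintro ⟨h1, -⟩
          exact absurd h1 (EReal.coe_ne_bot _)
      rw [this]
    · have hmax : max 0 (min 1 u) = u := by
        rw [min_eq_right hu1.le, max_eq_right hu0.le]
      set a : ℝ := (c - Real.sqrt (1 - ρ) * PhiInv u) / Real.sqrt ρ with ha
      have hAk : A k = (a : EReal) := by
        rw [hA, Athr, hmax, if_neg (not_le.mpr hu0), if_neg (not_le.mpr hu1)]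
      have hiff : ∀ ω : Ω, (u < Phi ((c - Real.sqrt ρ * V ω) / Real.sqrt (1 - ρ)) ↔ V ω < a) := by
        intro ω
        rw [lt_Phi_iff hu0 hu1, lt_div_iff₀ hs1ρ, ha, lt_div_iff₀ hsρ]
        constructor <;> intro hlt <;> nlinarith
      have hset1 : {ω | α < L ω} ∩ P s = {ω | V ω < a} ∩ P s := by
        ext ω
        simp only [Set.mem_inter_iff, Set.mem_setOf_eq]
        constructor
        · rintro ⟨h1, h2⟩; exact ⟨(hiff ω).mp ((hueq ω h2).mp h1), h2⟩
        · rintro ⟨h1, h2⟩; exact ⟨(hueq ω h2).mpr ((hiff ω).mpr h1), h2⟩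
      have hset2 : {ω | (V ω : EReal) ≤ A k} ∩ P s = {ω | V ω ≤ a} ∩ P s := by
        ext ω
        simp only [Set.mem_inter_iff, Set.mem_setOf_eq, hAk, EReal.coe_le_coe_iff]
      rw [hset1, hset2]
      have hnull : ℙ {ω | V ω = a} = 0 := by
        have hve : {ω | V ω = a} = V ⁻¹' {a} := rfl
        rw [hve, ← Measure.map_apply hV (measurableSet_singleton a), hVlaw]
        exact gauss_singleton a
      have hae : ∀ᵐ ω ∂(ℙ : Measure Ω), V ω ≠ a := by
        rw [ae_iff]
        simpa using hnull
      refine measure_congr (Filter.eventuallyEq_set.mpr ?_)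
      filter_upwards [hae] with ω hω
      simp only [Set.mem_inter_iff, Set.mem_setOf_eq]
      constructor
      · rintro ⟨h1, h2⟩; exact ⟨h1.le, h2⟩
      · rintro ⟨h1, h2⟩; exact ⟨h1.lt_of_ne hω, h2⟩
  -- Step 3: exchangeability
  have hstep3 : ∀ s : Finset (Fin n),
      ℙ ({ω | (V ω : EReal) ≤ A s.card} ∩ P s) = ℙ (T s.card) := by
    intro s
    have hks : s.card ≤ n := by
      simpa using Finset.card_le_univ s
    have hcard0 : (s0 s.card).card = s.card := card_filter_lt hks
    have hrw : ∀ r : Finset (Fin n), {ω | (V ω : EReal) ≤ A s.card} ∩ P r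
        = {ω | (V ω : EReal) ≤ A s.card ∧ ∀ i, ξ i ω ≤ h (V ω) ↔ i ∈ r} := by
      intro r
      ext ω
      simp only [Set.mem_inter_iff, Set.mem_setOf_eq, hP]
      constructor
      · rintro ⟨h1, h2⟩; exact ⟨h1, fun i => (hXiff i ω).symm.trans (h2 i)⟩
      · rintro ⟨h1, h2⟩; exact ⟨h1, fun i => (hXiff i ω).trans (h2 i)⟩
    have hTr : T s.card = {ω | (V ω : EReal) ≤ A s.card} ∩ P (s0 s.card) := by
      ext ω; simp only [hT, Set.mem_inter_iff, Set.mem_setOf_eq, hP]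
    rw [hTr, hrw s, hrw (s0 s.card)]
    exact exchange_lemma V ξ hV hξ hVlaw hξlaw hindep h hhm (A s.card) s (s0 s.card) hcard0.symm
  -- Step 4: collect by cardinality
  have hstep4 : ℙ {ω | α < L ω}
      = ∑ k ∈ Finset.range (n + 1), (n.choose k : ℝ≥0∞) * ℙ (T k) := by
    rw [hstep1]
    have hsum1 : ∀ s : Finset (Fin n), ℙ ({ω | α < L ω} ∩ P s) = ℙ (T s.card) :=
      fun s => (hstep2 s).trans (hstep3 s)
    rw [Finset.sum_congr rfl fun s _ => hsum1 s]
    have huniv : (Finset.univ : Finset (Finset (Fin n))) = (Finset.univ : Finset (Fin n)).powerset := by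
      rw [Finset.powerset_univ]
    rw [huniv, Finset.sum_powerset_apply_card (fun m => ℙ (T m))]
    rw [Finset.card_univ, Fintype.card_fin]
    refine Finset.sum_congr rfl fun k _ => ?_
    rw [nsmul_eq_mul]
  -- Step 5: identify the target event and pass to real numbers
  have hTarget : ∀ k : ℕ, {ω | (V ω : EReal) ≤ Athr c ρ N R N0 R0 α k ∧
      ∀ i : Fin n, ((i : ℕ) < k → X i ω ≤ c0) ∧ (k ≤ (i : ℕ) → c0 < X i ω)} = T k := by
    intro k
    ext ω
    simp only [hT, Set.mem_setOf_eq, hA, hs0, Finset.mem_filter, Finset.mem_univ, true_and]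
    refine and_congr Iff.rfl (forall_congr' fun i => ?_)
    by_cases hik : (i : ℕ) < k
    · simp only [hik, iff_true]
      constructor
      · rintro ⟨h1, -⟩
        exact h1 trivial
      · intro h1
        exact ⟨fun _ => h1, fun hc => absurd hik (by omega)⟩
    · simp only [hik, iff_false]
      constructor
      · rintro ⟨-, h2⟩; exact not_le.mpr (h2 (by omega))
      · intro h1; exact ⟨fun hc => hc.elim, fun _ => not_le.mp h1⟩
  rw [hstep4]
  rw [ENNReal.toReal_sum (fun k _ => ENNReal.mul_ne_top (ENNReal.natCast_ne_top _)
    (measure_ne_top _ _))]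
  refine Finset.sum_congr rfl fun k _ => ?_
  rw [hTarget k, ENNReal.toReal_mul, ENNReal.toReal_natCast]
end
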